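/- Let T be the ℵ₀-regular tree, t ∈ T a vertex, G_t = Aut(T, t) its stabiliser in Aut(T), and 1 ≤ p < ∞. Then the representation of G_t on ℓ_p(T \ {t}) by permutation of coordinates has no almost invariant unit vectors: there exist g₁, …, g_k ∈ G_t and ε > 0 such that max_i ‖x − λ(g_i)x‖ > ε‖x‖ for every non-zero x ∈ ℓ_p(T \ {t}). -/

import Mathlib

open scoped ENNReal

noncomputable section

/-- The vertex set of the `ℵ₀`-regular tree, realised as the free group `F_∞`. -/
abbrev V : Type := FreeGroup ℕ

/-- The Cayley graph of `F_∞` with respect to its free generating set: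
the `ℵ₀`-regular tree `T`. -/
def treeGraph : SimpleGraph V :=
  SimpleGraph.fromRel (fun s t => ∃ i : ℕ, t = s * FreeGroup.of i)

/-- The automorphism group `Aut(T)` of the `ℵ₀`-regular tree. -/
abbrev TreeAut := treeGraph ≃g treeGraph

/-- `ℓ_p(T)`. -/
abbrev lpT (p : ℝ≥0∞) := lp (fun _ : V => ℂ) p

lemma memℓp_comp {p : ℝ≥0∞} (g : V ≃ V) {x : V → ℂ} (h : Memℓp x p) :
    Memℓp (fun v => x (g v)) p := by
  rcases ENNReal.trichotomy p with rfl | rfl | hp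
  · rw [memℓp_zero_iff] at h ⊢
    exact Set.Finite.preimage g.injective.injOn h
  · rw [memℓp_infty_iff] at h ⊢
    apply h.mono
    rintro r ⟨v, rfl⟩
    exact ⟨g v, rfl⟩
  · apply memℓp_gen
    exact (g.summable_iff (f := fun v => ‖x v‖ ^ p.toReal)).2 ((memℓp_gen_iff hp).1 h)

/-- The shift representation of permutations of `T` on `ℂ^T`: `λ(g)x = x(g⁻¹ ·)`. -/
def lamFull (g : V ≃ V) : (V → ℂ) →ₗ[ℂ] (V → ℂ) where
  toFun x := fun v => x (g.symm v)
  map_add' _ _ := rfl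
  map_smul' _ _ := rfl

/-- The shift representation of permutations of `T` on `ℓ_p(T)`: `λ(g)x = x(g⁻¹ ·)`. -/
def lam (p : ℝ≥0∞) (g : V ≃ V) : lpT p →ₗ[ℂ] lpT p where
  toFun x := ⟨fun v => x (g.symm v), memℓp_comp g.symm (lp.memℓp x)⟩
  map_add' _ _ := rfl
  map_smul' _ _ := rfl

namespace NAIV

/-- reduce commutes with injective letter relabelling. -/
lemma reduce_map {α β : Type*} [DecidableEq α] [DecidableEq β] {π : α → β}
    (hπ : Function.Injective π) (L : List (α × Bool)) :
    FreeGroup.reduce (L.map (fun x => (π x.1, x.2)))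
      = (FreeGroup.reduce L).map (fun x => (π x.1, x.2)) := by
  induction L with
  | nil => simp
  | cons a L ih =>
    rw [List.map_cons, FreeGroup.reduce.cons, FreeGroup.reduce.cons, ih]
    cases h : FreeGroup.reduce L with
    | nil => simp
    | cons b M =>
      simp only [List.map_cons]
      by_cases hc : a.1 = b.1 ∧ a.2 = !b.2
      · rw [if_pos ⟨congrArg π hc.1, hc.2⟩, if_pos hc]
      · rw [if_neg, if_neg hc]
        · rfl
        · rintro ⟨h1, h2⟩
          exact hc ⟨hπ h1, h2⟩

lemma toWord_map {α β : Type*} [DecidableEq α] [DecidableEq β] {π : α → β}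
    (hπ : Function.Injective π) (w : FreeGroup α) :
    (FreeGroup.map π w).toWord = w.toWord.map (fun x => (π x.1, x.2)) := by
  conv_lhs => rw [← FreeGroup.mk_toWord (x := w)]
  rw [FreeGroup.map.mk, FreeGroup.toWord_mk, reduce_map hπ, FreeGroup.reduce_toWord]

/-- Prepending a letter that does not cancel. -/
lemma toWord_cons {α : Type*} [DecidableEq α] (c : α) (s : Bool) (x : FreeGroup α)
    (h : x.toWord.head? ≠ some (c, !s)) :
    (FreeGroup.mk [(c, s)] * x).toWord = (c, s) :: x.toWord := by
  conv_lhs => rw [← FreeGroup.mk_toWord (x := x)]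
  rw [FreeGroup.mul_mk, List.singleton_append, FreeGroup.toWord_mk, FreeGroup.reduce.cons,
    FreeGroup.reduce_toWord]
  cases hx : x.toWord with
  | nil => rfl
  | cons hd tl =>
    rw [hx] at h
    have : ¬((c, s).1 = hd.1 ∧ (c, s).2 = !hd.2) := by
      rintro ⟨h1, h2⟩
      apply h
      simp only [List.head?_cons, Option.some_inj]
      obtain ⟨hd1, hd2⟩ := hd
      simp only at h1 h2
      subst h1
      simp [h2]
    show (if (c, s).1 = hd.1 ∧ (c, s).2 = !hd.2 then tl else (c, s) :: hd :: tl)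
        = (c, s) :: hd :: tl
    rw [if_neg this]


/-! ### The free group on two generators and its paradoxical decomposition -/

abbrev Gam := FreeGroup Bool

instance : Countable Gam := by
  show Countable (Quot _)
  infer_instance

instance : Infinite Gam :=
  Infinite.of_surjective
    (FreeGroup.lift (fun _ => (Multiplicative.ofAdd (1 : ℤ))) : Gam →* Multiplicative ℤ)
    (fun n => ⟨FreeGroup.of true ^ (n.toAdd), by simp [← ofAdd_zsmul]⟩)

def ga : Gam := FreeGroup.of true
def gb : Gam := FreeGroup.of false

/-- first letter -/
def fl (g : Gam) : Option (Bool × Bool) := g.toWord.head?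

lemma toWord_pow_inv_a (n : ℕ) : ((ga⁻¹) ^ n).toWord = List.replicate n (true, false) := by
  have h1 : ga⁻¹ = FreeGroup.mk [(true, false)] := rfl
  rw [h1, FreeGroup.pow_mk, FreeGroup.toWord_mk]
  rw [List.flatten_replicate_singleton]
  exact FreeGroup.reduce_replicate n _

def Pa : Set Gam := {g | ∃ n : ℕ, g = ga⁻¹ ^ n}

lemma fl_Pa {g : Gam} (h : g ∈ Pa) : fl g = none ∨ fl g = some (true, false) := by
  obtain ⟨n, rfl⟩ := h
  cases n with
  | zero => left; rfl
  | succ m =>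
    right
    show (((ga⁻¹) ^ (m + 1)).toWord).head? = _
    rw [toWord_pow_inv_a]
    simp [List.replicate_succ]

def A1 : Set Gam := {g | fl g = some (true, true)} ∪ Pa
def A2 : Set Gam := {g | fl g = some (true, false)} \ Pa
def B1 : Set Gam := {g | fl g = some (false, true)}
def B2 : Set Gam := {g | fl g = some (false, false)}

lemma fl_mul_of (c : Bool) (x : Gam) (h : fl x ≠ some (c, false)) :
    fl (FreeGroup.of c * x) = some (c, true) := by
  have : FreeGroup.of c = FreeGroup.mk [(c, true)] := rfl
  rw [this, fl, toWord_cons c true x (by simpa [fl] using h)]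
  rfl

lemma cover_a (g : Gam) : g ∈ A2 ∨ ga * g ∈ A1 := by
  by_cases hP : g ∈ Pa
  · right
    obtain ⟨n, rfl⟩ := hP
    cases n with
    | zero =>
      left
      show fl (ga * 1) = some (true, true)
      rw [mul_one]
      rfl
    | succ m =>
      right
      exact ⟨m, by rw [pow_succ']; group⟩
  · by_cases hfl : fl g = some (true, false)
    · left; exact ⟨hfl, hP⟩
    · right; left
      exact fl_mul_of true g hfl

lemma cover_b (g : Gam) : g ∈ B2 ∨ gb * g ∈ B1 := by
  by_cases hfl : fl g = some (false, false)
  · left; exact hfl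
  · right
    exact fl_mul_of false g hfl

open scoped Classical in
/-- The four pieces are pairwise disjoint: indicator sum bound. -/
lemma sum_ind_le {y : ℝ} (hy : 0 ≤ y) (g : Gam) :
    (if g ∈ A1 then y else 0) + (if g ∈ A2 then y else 0)
      + (if g ∈ B1 then y else 0) + (if g ∈ B2 then y else 0) ≤ y := by
  by_cases hP : g ∈ Pa
  · have h2 : g ∉ A2 := fun h => h.2 hP
    have hfl := fl_Pa hP
    have h3 : g ∉ B1 := by
      intro h
      have h' : fl g = some (false, true) := h
      rcases hfl with h'' | h'' <;> rw [h''] at h' <;> simp at h'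
    have h4 : g ∉ B2 := by
      intro h
      have h' : fl g = some (false, false) := h
      rcases hfl with h'' | h'' <;> rw [h''] at h' <;> simp at h'
    simp only [if_neg h2, if_neg h3, if_neg h4, add_zero]
    split_ifs <;> simp [hy]
  · rcases hf : fl g with - | ⟨c, s⟩
    · have hW : ∀ ℓ : Bool × Bool, fl g ≠ some ℓ := by simp [hf]
      have h1 : g ∉ A1 := by rintro (h | h); exacts [hW _ h, hP h]
      have h2 : g ∉ A2 := fun h => hW _ h.1
      have h3 : g ∉ B1 := fun h => hW _ h
      have h4 : g ∉ B2 := fun h => hW _ h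
      simp [h1, h2, h3, h4, hy]
    · have mem1 : g ∈ A1 ↔ (c, s) = (true, true) := by
        constructor
        · rintro (h | h)
          · have h' : fl g = some (true, true) := h
            rw [hf] at h'; exact Option.some_inj.1 h'
          · exact absurd h hP
        · intro h; left; exact hf.trans (congrArg some h)
      have mem2 : g ∈ A2 ↔ (c, s) = (true, false) := by
        constructor
        · rintro ⟨h, -⟩
          have h' : fl g = some (true, false) := h
          rw [hf] at h'; exact Option.some_inj.1 h'
        · intro h; exact ⟨hf.trans (congrArg some h), hP⟩
      have mem3 : g ∈ B1 ↔ (c, s) = (false, true) := by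
        constructor
        · intro h
          have h' : fl g = some (false, true) := h
          rw [hf] at h'; exact Option.some_inj.1 h'
        · intro h; exact hf.trans (congrArg some h)
      have mem4 : g ∈ B2 ↔ (c, s) = (false, false) := by
        constructor
        · intro h
          have h' : fl g = some (false, false) := h
          rw [hf] at h'; exact Option.some_inj.1 h'
        · intro h; exact hf.trans (congrArg some h)
      rcases c <;> rcases s <;>
        simp [mem1, mem2, mem3, mem4, hy]


/-! ### Tree automorphisms -/

/-- Left translation as a tree automorphism. -/
def transIso (s : V) : TreeAut where
  toEquiv := Equiv.mulLeft s
  map_rel_iff' := by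
    intro a b
    simp [treeGraph, SimpleGraph.fromRel_adj, mul_assoc]

/-- Relabelling generators as a tree automorphism. -/
def mapIso (π : ℕ ≃ ℕ) : TreeAut where
  toEquiv := (FreeGroup.freeGroupCongr π).toEquiv
  map_rel_iff' := by
    intro a b
    simp only [MulEquiv.toEquiv_eq_coe, Equiv.coe_fn_mk, treeGraph, SimpleGraph.fromRel_adj,
      ne_eq, EmbeddingLike.apply_eq_iff_eq, EquivLike.coe_coe]
    constructor
    · rintro ⟨h1, h2⟩
      refine ⟨h1, ?_⟩
      rcases h2 with ⟨i, hi⟩ | ⟨i, hi⟩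
      · left; exact ⟨π.symm i, by
          apply (FreeGroup.freeGroupCongr π).injective
          simpa using hi⟩
      · right; exact ⟨π.symm i, by
          apply (FreeGroup.freeGroupCongr π).injective
          simpa using hi⟩
    · rintro ⟨h1, h2⟩
      refine ⟨h1, ?_⟩
      rcases h2 with ⟨i, hi⟩ | ⟨i, hi⟩
      · left; exact ⟨π i, by subst hi; simp⟩
      · right; exact ⟨π i, by subst hi; simp⟩

/-- A fixed enumeration of the free group on two generators. -/
def eG : Gam ≃ ℕ := nonempty_equiv_of_countable.some

/-- `g ∈ Gam` acting on `ℕ` via the enumeration. -/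
def piG (g : Gam) : ℕ ≃ ℕ := (eG.symm.trans (Equiv.mulLeft g)).trans eG

/-- The tree automorphism fixing `t` induced by `g : Gam` permuting the branches at `t`. -/
def Psi (t : V) (g : Gam) : TreeAut :=
  ((transIso t⁻¹).trans (mapIso (piG g))).trans (transIso t)

lemma Psi_apply (t : V) (g : Gam) (v : V) :
    Psi t g v = t * FreeGroup.map (piG g) (t⁻¹ * v) := rfl

lemma Psi_fixes (t : V) (g : Gam) : Psi t g t = t := by
  rw [Psi_apply, inv_mul_cancel, map_one, mul_one]

lemma Psi_ne_t {t : V} (g : Gam) {v : V} : Psi t g v ≠ t ↔ v ≠ t := by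
  constructor
  · intro h hv; rw [hv] at h; exact h (Psi_fixes t g)
  · intro hv h
    apply hv
    apply (Psi t g).injective
    rw [h, Psi_fixes]

/-- The branch index of a vertex `v ≠ t`, as an element of `Gam`. -/
def gam (t : V) (v : V) : Gam := eG.symm ((t⁻¹ * v).toWord.headI.1)

lemma gam_Psi (t : V) (g : Gam) {v : V} (hv : v ≠ t) :
    gam t (Psi t g v) = g * gam t v := by
  have hw : (t⁻¹ * v) ≠ 1 := by
    intro h
    apply hv
    have := congrArg (t * ·) h
    simpa [mul_assoc] using this
  have hnil : (t⁻¹ * v).toWord ≠ [] := fun h => hw (FreeGroup.toWord_eq_nil_iff.1 h)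
  have key : t⁻¹ * Psi t g v = FreeGroup.map (piG g) (t⁻¹ * v) := by
    rw [Psi_apply, ← mul_assoc, inv_mul_cancel, one_mul]
  unfold gam
  rw [key, toWord_map (piG g).injective]
  cases hL : (t⁻¹ * v).toWord with
  | nil => exact absurd hL hnil
  | cons hd tl =>
    simp only [List.map_cons, List.headI]
    show eG.symm (piG g hd.1) = g * eG.symm hd.1
    unfold piG
    simp


/-! ### Analytic lemmas -/

lemma rpow_sub_le {q r s : ℝ} (hq : 1 ≤ q) (hs : 0 ≤ s) (hsr : s ≤ r) :
    r ^ q - s ^ q ≤ q * (r ^ (q - 1) * (r - s)) := by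
  rcases eq_or_lt_of_le hsr with rfl | hlt
  · simp
  · have hr0 : 0 ≤ r := le_trans hs hsr
    have hcont : ContinuousOn (fun x : ℝ => x ^ q) (Set.Icc s r) := by
      intro x hx
      exact (Real.continuousAt_rpow_const x q
        (Or.inr (lt_of_lt_of_le zero_lt_one hq).le)).continuousWithinAt
    have hderiv : ∀ x ∈ Set.Ioo s r,
        HasDerivAt (fun x : ℝ => x ^ q) (q * x ^ (q - 1)) x := by
      intro x hx
      exact Real.hasDerivAt_rpow_const (Or.inl (ne_of_gt (lt_of_le_of_lt hs hx.1)))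
    obtain ⟨c, hc, hceq⟩ := exists_hasDerivAt_eq_slope (fun x : ℝ => x ^ q)
      (fun x => q * x ^ (q - 1)) hlt hcont hderiv
    have hc0 : 0 ≤ c := le_trans hs (le_of_lt hc.1)
    have hcr : c ^ (q - 1) ≤ r ^ (q - 1) :=
      Real.rpow_le_rpow hc0 (le_of_lt hc.2) (by linarith)
    have h1 : r ^ q - s ^ q = q * c ^ (q - 1) * (r - s) := by
      rw [hceq, div_mul_cancel₀ _ (ne_of_gt (sub_pos.2 hlt))]
    rw [h1]
    have : q * c ^ (q - 1) * (r - s) ≤ q * r ^ (q - 1) * (r - s) := by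
      apply mul_le_mul_of_nonneg_right _ (by linarith)
      apply mul_le_mul_of_nonneg_left hcr (by linarith)
    linarith [this]

lemma abs_rpow_sub_le {q r s : ℝ} (hq : 1 ≤ q) (hr : 0 ≤ r) (hs : 0 ≤ s) :
    |r ^ q - s ^ q| ≤ q * ((r ^ (q - 1) + s ^ (q - 1)) * |r - s|) := by
  have key : ∀ u v : ℝ, 0 ≤ u → u ≤ v →
      |v ^ q - u ^ q| ≤ q * ((v ^ (q - 1) + u ^ (q - 1)) * |v - u|) := by
    intro u v hu huv
    have hv : 0 ≤ v := le_trans hu huv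
    have h1 : u ^ q ≤ v ^ q := Real.rpow_le_rpow hu huv (by linarith)
    rw [abs_of_nonneg (by linarith), abs_of_nonneg (by linarith)]
    have := rpow_sub_le hq hu huv
    have h2 : q * (v ^ (q - 1) * (v - u)) ≤ q * ((v ^ (q - 1) + u ^ (q - 1)) * (v - u)) := by
      apply mul_le_mul_of_nonneg_left _ (by linarith)
      apply mul_le_mul_of_nonneg_right _ (by linarith)
      have : 0 ≤ u ^ (q - 1) := Real.rpow_nonneg hu _
      linarith
    linarith
  rcases le_total s r with h | h
  · exact key s r hs h
  · rw [abs_sub_comm (r ^ q), abs_sub_comm r s, add_comm (r ^ (q - 1))]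
    exact key r s hr h

/-- Hölder step. -/
lemma holder_aux {ι : Type*} {q : ℝ} (hq : 1 ≤ q) (f g : ι → ℝ)
    (hf0 : ∀ v, 0 ≤ f v) (hg0 : ∀ v, 0 ≤ g v)
    (hfs : Summable fun v => f v ^ q) (hgs : Summable fun v => g v ^ q) :
    (Summable fun v => f v ^ (q - 1) * g v) ∧
      ∑' v, f v ^ (q - 1) * g v
        ≤ (∑' v, f v ^ q) ^ ((q - 1) / q) * (∑' v, g v ^ q) ^ (1 / q) := by
  rcases eq_or_lt_of_le hq with rfl | hq1
  · constructor
    · simpa using hgs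
    · have h1 : (fun v => f v ^ (1 - 1 : ℝ) * g v) = g := by
        funext v; simp
    -- note (q-1)/q = 0
      rw [h1]
      simp [Real.rpow_natCast]
  · have hq0 : (0 : ℝ) < q := lt_trans zero_lt_one hq1
    have hq1' : q - 1 ≠ 0 := ne_of_gt (by linarith)
    have hpq : (q / (q - 1)).HolderConjugate q :=
      ((Real.holderConjugate_iff_eq_conjExponent hq1).2 rfl).symm
    have hfq : (fun v => (f v ^ (q - 1)) ^ (q / (q - 1))) = fun v => f v ^ q := by
      funext v
      rw [← Real.rpow_mul (hf0 v)]
      congr 1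
      field_simp
    have hsum1 : Summable fun v => (f v ^ (q - 1)) ^ (q / (q - 1)) := by rw [hfq]; exact hfs
    obtain ⟨hS, hB⟩ := Real.summable_and_inner_le_Lp_mul_Lq_tsum_of_nonneg hpq
      (f := fun v => f v ^ (q - 1)) (g := g)
      (fun v => Real.rpow_nonneg (hf0 v) _) hg0 hsum1 hgs
    refine ⟨hS, ?_⟩
    rw [hfq] at hB
    calc ∑' v, f v ^ (q - 1) * g v
        ≤ (∑' v, f v ^ q) ^ (1 / (q / (q - 1))) * (∑' v, g v ^ q) ^ (1 / q) := hB
      _ = (∑' v, f v ^ q) ^ ((q - 1) / q) * (∑' v, g v ^ q) ^ (1 / q) := by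
          congr 2
          field_simp


/-- The set of vertices `≠ t` whose branch index lies in `E`. -/
def Sset (t : V) (E : Set Gam) : Set V := {v | v ≠ t ∧ gam t v ∈ E}

lemma mem_Sset {t v : V} {E : Set Gam} : v ∈ Sset t E ↔ v ≠ t ∧ gam t v ∈ E := Iff.rfl

lemma Psi_symm_fixes (t : V) (g : Gam) : (Psi t g).symm t = t := by
  calc (Psi t g).symm t = (Psi t g).symm ((Psi t g) t) := by rw [Psi_fixes t g]
    _ = t := (Psi t g).symm_apply_apply t

end NAIV

set_option maxHeartbeats 2000000 in
/-- For a vertex `t` of the `ℵ₀`-regular tree and `1 ≤ p < ∞`, the permutation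
representation of the stabiliser `Aut(T, t)` on `ℓ_p(T \ {t})` has no almost invariant
unit vectors: there are `g₁, …, g_k ∈ Aut(T, t)` and `ε > 0` with
`max_i ‖x − λ(g_i)x‖ > ε ‖x‖` for every non-zero `x ∈ ℓ_p(T \ {t})`. -/
theorem no_almost_invariant_vectors (t : V) (p : ℝ≥0∞) (hp1 : 1 ≤ p) (hp2 : p ≠ ∞) :
    ∃ (k : ℕ) (gs : Fin k → TreeAut) (ε : ℝ), 0 < ε ∧
      (∀ i : Fin k, gs i t = t) ∧
      ∀ x : lpT p, (x : V → ℂ) t = 0 → x ≠ 0 →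
        ∃ i : Fin k, ε * ‖x‖ < ‖x - lam p ((gs i).toEquiv) x‖ := by
  classical
  set q := p.toReal with hqdef
  have hq1 : 1 ≤ q := by
    rw [hqdef, ← ENNReal.toReal_one]
    exact ENNReal.toReal_mono hp2 hp1
  have hq0 : 0 < q := lt_of_lt_of_le zero_lt_one hq1
  refine ⟨2, ![((NAIV.Psi t NAIV.ga⁻¹).symm : TreeAut),
              ((NAIV.Psi t NAIV.gb⁻¹).symm : TreeAut)], 1 / (8 * q),
    by positivity, ?_, ?_⟩
  · intro i
    fin_cases i <;>
      simp only [Matrix.cons_val_zero, Matrix.cons_val_one, Matrix.head_cons] <;>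
      exact NAIV.Psi_symm_fixes _ _
  · intro x hxt hx0
    haveI : Fact (1 ≤ p) := ⟨hp1⟩
    have hxpos : (0 : ℝ) < ‖x‖ := by
      rw [norm_pos_iff]
      exact hx0
    set y : V → ℝ := fun v => ‖x v‖ ^ q with hy
    have hy0 : ∀ v, 0 ≤ y v := fun v => Real.rpow_nonneg (norm_nonneg _) _
    have hsum : Summable y := (memℓp_gen_iff hq0).1 (lp.memℓp x)
    have htot : ∑' v, y v = ‖x‖ ^ q := (lp.norm_rpow_eq_tsum hq0 x).symm
    have hyt : y t = 0 := by
      simp only [hy, hxt, norm_zero]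
      exact Real.zero_rpow (ne_of_gt hq0)
    set μ : Set NAIV.Gam → ℝ := fun E => ∑' v, Set.indicator (NAIV.Sset t E) y v with hμ
    have hμsum : ∀ E, Summable (Set.indicator (NAIV.Sset t E) y) := fun E => hsum.indicator _
    have hμnonneg : ∀ E v, 0 ≤ Set.indicator (NAIV.Sset t E) y v :=
      fun E v => Set.indicator_nonneg (fun a _ => hy0 a) v
    have huniv : μ Set.univ = ‖x‖ ^ q := by
      rw [← htot]
      simp only [hμ]
      congr 1
      funext v
      by_cases hv : v = t
      · rw [hv, hyt, Set.indicator_apply_eq_zero]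
        intro _
        exact hyt
      · exact Set.indicator_of_mem (NAIV.mem_Sset.2 ⟨hv, Set.mem_univ _⟩) y
    -- translation estimate
    have trans_est : ∀ (g : NAIV.Gam) (E : Set NAIV.Gam),
        μ {h | g⁻¹ * h ∈ E} ≤ μ E + ∑' u, |y ((NAIV.Psi t g) u) - y u| := by
      intro g E
      have hΦap : ∀ u, (NAIV.Psi t g).toEquiv u = (NAIV.Psi t g) u := fun u => rfl
      have hΦt : ∀ u : V, ((NAIV.Psi t g) u = t) ↔ u = t := by
        intro u
        constructor
        · intro h
          by_contra hu
          exact ((NAIV.Psi_ne_t g).2 hu) h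
        · intro hu
          rw [hu]
          exact NAIV.Psi_fixes t g
      have hDsum : Summable fun u => |y ((NAIV.Psi t g) u) - y u| := by
        apply Summable.of_nonneg_of_le (fun u => abs_nonneg _) (fun u => ?_)
          (((NAIV.Psi t g).toEquiv.summable_iff.2 hsum).add hsum)
        simp only [Pi.add_apply, Function.comp_apply, hΦap]
        rw [abs_le]
        constructor
        · linarith [hy0 u, hy0 ((NAIV.Psi t g) u)]
        · linarith [hy0 u, hy0 ((NAIV.Psi t g) u)]
      have step1 : μ {h | g⁻¹ * h ∈ E}
          = ∑' u, Set.indicator (NAIV.Sset t E) (fun w => y ((NAIV.Psi t g) w)) u := by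
        simp only [hμ]
        rw [← (NAIV.Psi t g).toEquiv.tsum_eq
          (Set.indicator (NAIV.Sset t {h | g⁻¹ * h ∈ E}) y)]
        congr 1
        funext u
        have hmem : (NAIV.Psi t g).toEquiv u ∈ NAIV.Sset t {h | g⁻¹ * h ∈ E}
            ↔ u ∈ NAIV.Sset t E := by
          rw [NAIV.mem_Sset, NAIV.mem_Sset, hΦap]
          by_cases hu : u = t
          · constructor
            · rintro ⟨h1, -⟩
              exact absurd (by rw [hu]; exact NAIV.Psi_fixes t g) h1
            · rintro ⟨h1, -⟩
              exact absurd hu h1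
          · have h1 : (NAIV.Psi t g) u ≠ t := (NAIV.Psi_ne_t g).2 hu
            simp only [hu, h1, ne_eq, not_false_iff, true_and]
            rw [NAIV.gam_Psi t g hu]
            simp
        rw [Set.indicator_apply, Set.indicator_apply, if_congr hmem rfl rfl]
        exact hΦap u ▸ rfl
      rw [step1]
      simp only [hμ]
      rw [← Summable.tsum_add (hμsum E) hDsum]
      apply Summable.tsum_le_tsum _
        (((NAIV.Psi t g).toEquiv.summable_iff.2 hsum).indicator (NAIV.Sset t E))
        ((hμsum E).add hDsum)
      intro u
      simp only [Set.indicator_apply, Function.comp_apply, hΦap]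
      by_cases hu : u ∈ NAIV.Sset t E
      · rw [if_pos hu, if_pos hu]
        have h2 := le_abs_self (y ((NAIV.Psi t g) u) - y u)
        linarith
      · rw [if_neg hu, if_neg hu]
        positivity
    -- covering estimate
    have cover_est : ∀ (g0 : NAIV.Gam) (E1 E2 : Set NAIV.Gam),
        (∀ h : NAIV.Gam, h ∈ E2 ∨ g0 * h ∈ E1) →
        μ Set.univ ≤ μ {h | g0 * h ∈ E1} + μ E2 := by
      intro g0 E1 E2 hcov
      simp only [hμ]
      rw [← Summable.tsum_add (hμsum _) (hμsum _)]
      apply Summable.tsum_le_tsum _ (hμsum _) ((hμsum _).add (hμsum _))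
      intro v
      by_cases hv : v ∈ NAIV.Sset t Set.univ
      · rw [Set.indicator_of_mem hv]
        rcases hcov (NAIV.gam t v) with h | h
        · have hmem : v ∈ NAIV.Sset t E2 := NAIV.mem_Sset.2 ⟨(NAIV.mem_Sset.1 hv).1, h⟩
          rw [Set.indicator_of_mem hmem]
          linarith [hμnonneg {h | g0 * h ∈ E1} v]
        · have hmem : v ∈ NAIV.Sset t {h | g0 * h ∈ E1} :=
            NAIV.mem_Sset.2 ⟨(NAIV.mem_Sset.1 hv).1, h⟩
          rw [Set.indicator_of_mem hmem]
          linarith [hμnonneg E2 v]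
      · rw [Set.indicator_of_notMem hv]
        linarith [hμnonneg {h | g0 * h ∈ E1} v, hμnonneg E2 v]
    -- partition estimate
    have part_est : μ NAIV.A1 + μ NAIV.A2 + μ NAIV.B1 + μ NAIV.B2 ≤ μ Set.univ := by
      simp only [hμ]
      rw [← Summable.tsum_add (hμsum NAIV.A1) (hμsum NAIV.A2),
        ← Summable.tsum_add ((hμsum NAIV.A1).add (hμsum NAIV.A2)) (hμsum NAIV.B1),
        ← Summable.tsum_add (((hμsum NAIV.A1).add (hμsum NAIV.A2)).add (hμsum NAIV.B1)) (hμsum NAIV.B2)]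
      apply Summable.tsum_le_tsum _
        ((((hμsum NAIV.A1).add (hμsum NAIV.A2)).add (hμsum NAIV.B1)).add (hμsum NAIV.B2))
        (hμsum _)
      intro v
      by_cases hv : v = t
      · have hnm : ∀ E : Set NAIV.Gam, v ∉ NAIV.Sset t E :=
          fun E h => (NAIV.mem_Sset.1 h).1 hv
        simp only [Set.indicator_of_notMem (hnm _)]
        simp
      · have key := NAIV.sum_ind_le (hy0 v) (NAIV.gam t v)
        have hind : ∀ E : Set NAIV.Gam,
            Set.indicator (NAIV.Sset t E) y v = if NAIV.gam t v ∈ E then y v else 0 := by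
          intro E
          rw [Set.indicator_apply]
          have hiff : v ∈ NAIV.Sset t E ↔ NAIV.gam t v ∈ E := by
            rw [NAIV.mem_Sset]
            simp [hv]
          rw [if_congr hiff rfl rfl]
        rw [hind, hind, hind, hind, Set.indicator_of_mem (NAIV.mem_Sset.2 ⟨hv, Set.mem_univ _⟩)]
        convert key using 2
    -- the D bound
    have D_bound : ∀ g : NAIV.Gam,
        ∑' u, |y ((NAIV.Psi t g) u) - y u|
          ≤ q * (2 * (‖x‖ ^ (q - 1) * ‖x - lam p ((NAIV.Psi t g).symm).toEquiv x‖)) := by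
      intro g
      have hΦap : ∀ u, (NAIV.Psi t g).toEquiv u = (NAIV.Psi t g) u := fun u => rfl
      set z : lpT p := lam p ((NAIV.Psi t g).symm).toEquiv x with hzdef
      have hzu : ∀ u, (z : V → ℂ) u = x ((NAIV.Psi t g) u) := fun u => rfl
      have hd : ∀ u : V, ‖(x - z : lpT p) u‖ = ‖x u - (z : V → ℂ) u‖ := by
        intro u
        rw [lp.coeFn_sub, Pi.sub_apply]
      have hxzs : Summable fun u : V => ‖(x - z : lpT p) u‖ ^ q :=
        (memℓp_gen_iff hq0).1 (lp.memℓp (x - z))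
      have hzs : Summable fun u : V => ‖(z : V → ℂ) u‖ ^ q :=
        (memℓp_gen_iff hq0).1 (lp.memℓp z)
      have h1 := NAIV.holder_aux hq1 (fun u : V => ‖x u‖) (fun u => ‖(x - z : lpT p) u‖)
        (fun u => norm_nonneg _) (fun u => norm_nonneg _) hsum hxzs
      have h2 := NAIV.holder_aux hq1 (fun u : V => ‖(z : V → ℂ) u‖)
        (fun u => ‖(x - z : lpT p) u‖)
        (fun u => norm_nonneg _) (fun u => norm_nonneg _) hzs hxzs
      have hDsum : Summable fun u => |y ((NAIV.Psi t g) u) - y u| := by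
        apply Summable.of_nonneg_of_le (fun u => abs_nonneg _) (fun u => ?_)
          (((NAIV.Psi t g).toEquiv.summable_iff.2 hsum).add hsum)
        simp only [Pi.add_apply, Function.comp_apply, hΦap]
        rw [abs_le]
        constructor
        · linarith [hy0 u, hy0 ((NAIV.Psi t g) u)]
        · linarith [hy0 u, hy0 ((NAIV.Psi t g) u)]
      have hpt : ∀ u, |y ((NAIV.Psi t g) u) - y u|
          ≤ q * (‖x u‖ ^ (q - 1) * ‖(x - z : lpT p) u‖
              + ‖(z : V → ℂ) u‖ ^ (q - 1) * ‖(x - z : lpT p) u‖) := by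
        intro u
        have e2 : |y ((NAIV.Psi t g) u) - y u| = |‖x u‖ ^ q - ‖(z : V → ℂ) u‖ ^ q| := by
          have e1 : y ((NAIV.Psi t g) u) = ‖(z : V → ℂ) u‖ ^ q := by rw [hzu]
          rw [e1, abs_sub_comm]
        rw [e2]
        have habs := NAIV.abs_rpow_sub_le hq1 (norm_nonneg (x u)) (norm_nonneg ((z : V → ℂ) u))
        have hnd : |‖x u‖ - ‖(z : V → ℂ) u‖| ≤ ‖(x - z : lpT p) u‖ := by
          rw [hd]
          exact abs_norm_sub_norm_le _ _
        have hfac : (‖x u‖ ^ (q - 1) + ‖(z : V → ℂ) u‖ ^ (q - 1)) * |‖x u‖ - ‖(z : V → ℂ) u‖|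
            ≤ (‖x u‖ ^ (q - 1) + ‖(z : V → ℂ) u‖ ^ (q - 1)) * ‖(x - z : lpT p) u‖ := by
          apply mul_le_mul_of_nonneg_left hnd
          have h3 := Real.rpow_nonneg (norm_nonneg (x u)) (q - 1)
          have h4 := Real.rpow_nonneg (norm_nonneg ((z : V → ℂ) u)) (q - 1)
          linarith
        calc |‖x u‖ ^ q - ‖(z : V → ℂ) u‖ ^ q|
            ≤ q * ((‖x u‖ ^ (q - 1) + ‖(z : V → ℂ) u‖ ^ (q - 1))
                * |‖x u‖ - ‖(z : V → ℂ) u‖|) := habs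
          _ ≤ q * ((‖x u‖ ^ (q - 1) + ‖(z : V → ℂ) u‖ ^ (q - 1))
                * ‖(x - z : lpT p) u‖) := mul_le_mul_of_nonneg_left hfac (le_of_lt hq0)
          _ = q * (‖x u‖ ^ (q - 1) * ‖(x - z : lpT p) u‖
                + ‖(z : V → ℂ) u‖ ^ (q - 1) * ‖(x - z : lpT p) u‖) := by ring
      have hxq : ∑' v : V, ‖x v‖ ^ q = ‖x‖ ^ q := (lp.norm_rpow_eq_tsum hq0 x).symm
      have hzq : ∑' v : V, ‖(z : V → ℂ) v‖ ^ q = ‖x‖ ^ q := by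
        have hco : ∀ v : V, ‖(z : V → ℂ) v‖ ^ q
            = (fun w => ‖x w‖ ^ q) ((NAIV.Psi t g).toEquiv v) := fun v => by rw [hzu]; rfl
        rw [tsum_congr hco, (NAIV.Psi t g).toEquiv.tsum_eq (fun w => ‖x w‖ ^ q), hxq]
      have hdq : ∑' v : V, ‖(x - z : lpT p) v‖ ^ q = ‖x - z‖ ^ q :=
        (lp.norm_rpow_eq_tsum hq0 (x - z)).symm
      have epow1 : q * ((q - 1) / q) = q - 1 := by field_simp
      have epow2 : q * (1 / q) = 1 := by field_simp
      have hbound1 : ∑' u : V, ‖x u‖ ^ (q - 1) * ‖(x - z : lpT p) u‖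
          ≤ ‖x‖ ^ (q - 1) * ‖x - z‖ := by
        refine le_trans h1.2 ?_
        rw [hxq, hdq, ← Real.rpow_mul (norm_nonneg x), ← Real.rpow_mul (norm_nonneg (x - z)),
          epow1, epow2, Real.rpow_one]
      have hbound2 : ∑' u : V, ‖(z : V → ℂ) u‖ ^ (q - 1) * ‖(x - z : lpT p) u‖
          ≤ ‖x‖ ^ (q - 1) * ‖x - z‖ := by
        refine le_trans h2.2 ?_
        rw [hzq, hdq, ← Real.rpow_mul (norm_nonneg x), ← Real.rpow_mul (norm_nonneg (x - z)),
          epow1, epow2, Real.rpow_one]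
      calc ∑' u, |y ((NAIV.Psi t g) u) - y u|
          ≤ ∑' u, q * (‖x u‖ ^ (q - 1) * ‖(x - z : lpT p) u‖
              + ‖(z : V → ℂ) u‖ ^ (q - 1) * ‖(x - z : lpT p) u‖) :=
            Summable.tsum_le_tsum hpt hDsum ((h1.1.add h2.1).mul_left q)
        _ = q * ((∑' u : V, ‖x u‖ ^ (q - 1) * ‖(x - z : lpT p) u‖)
              + (∑' u : V, ‖(z : V → ℂ) u‖ ^ (q - 1) * ‖(x - z : lpT p) u‖)) := by
            rw [tsum_mul_left, Summable.tsum_add h1.1 h2.1]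
        _ ≤ q * (2 * (‖x‖ ^ (q - 1) * ‖x - z‖)) := by
            apply mul_le_mul_of_nonneg_left _ (le_of_lt hq0)
            linarith
    -- assemble
    have key1 := cover_est NAIV.ga NAIV.A1 NAIV.A2 NAIV.cover_a
    have key2 := cover_est NAIV.gb NAIV.B1 NAIV.B2 NAIV.cover_b
    have t1 := trans_est NAIV.ga⁻¹ NAIV.A1
    have t2 := trans_est NAIV.gb⁻¹ NAIV.B1
    rw [inv_inv] at t1 t2
    have d1 := D_bound NAIV.ga⁻¹
    have d2 := D_bound NAIV.gb⁻¹
    set Na := ‖x - lam p ((NAIV.Psi t NAIV.ga⁻¹).symm).toEquiv x‖ with hNa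
    set Nb := ‖x - lam p ((NAIV.Psi t NAIV.gb⁻¹).symm).toEquiv x‖ with hNb
    have hM : ‖x‖ ^ q ≤ q * (2 * (‖x‖ ^ (q - 1) * Na)) + q * (2 * (‖x‖ ^ (q - 1) * Nb)) := by
      rw [← huniv]
      linarith [key1, key2, t1, t2, part_est, d1, d2]
    have hsplit : ‖x‖ ^ q = ‖x‖ ^ (q - 1) * ‖x‖ := by
      rw [show q = (q - 1) + 1 by ring, Real.rpow_add hxpos, Real.rpow_one]
      ring_nf
    have hpow_pos : 0 < ‖x‖ ^ (q - 1) := Real.rpow_pos_of_pos hxpos _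
    have h8 : (0 : ℝ) < 8 * q := by linarith
    rcases le_total Na Nb with hN | hN
    · refine ⟨1, ?_⟩
      simp only [Matrix.cons_val_one, Matrix.head_cons, Matrix.cons_val_zero]
      rw [← hNb]
      have hxle : ‖x‖ ≤ 4 * q * Nb := by
        have hmid : ‖x‖ ^ (q - 1) * ‖x‖ ≤ ‖x‖ ^ (q - 1) * (4 * q * Nb) := by
          rw [← hsplit]
          nlinarith [hM, mul_nonneg (le_of_lt hq0) (le_of_lt hpow_pos)]
        exact le_of_mul_le_mul_left hmid hpow_pos
      have hNbpos : 0 < Nb := by nlinarith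
      rw [show (1 / (8 * q)) * ‖x‖ = ‖x‖ / (8 * q) by ring, div_lt_iff₀ h8]
      nlinarith [mul_pos hq0 hNbpos]
    · refine ⟨0, ?_⟩
      simp only [Matrix.cons_val_zero]
      rw [← hNa]
      have hxle : ‖x‖ ≤ 4 * q * Na := by
        have hmid : ‖x‖ ^ (q - 1) * ‖x‖ ≤ ‖x‖ ^ (q - 1) * (4 * q * Na) := by
          rw [← hsplit]
          nlinarith [hM, mul_nonneg (le_of_lt hq0) (le_of_lt hpow_pos)]
        exact le_of_mul_le_mul_left hmid hpow_pos
      have hNapos : 0 < Na := by nlinarith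
      rw [show (1 / (8 * q)) * ‖x‖ = ‖x‖ / (8 * q) by ring, div_lt_iff₀ h8]
      nlinarith [mul_pos hq0 hNapos]
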